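/- Let (Σ,μ) be a σ-finite measure space, 1 ≤ p < ∞, let Ω be a contractive, quasi-linear L∞-centralizer on L_p(μ), and let (u_n) be a normalized sequence of pairwise disjointly supported functions in L_p(μ). Suppose there is a constant C > 0 such that for every finitely supported scalar sequence λ = (λ_k) one has ∇_{[λu]}Ω ≤ C‖λ‖_p (λu denoting the tuple of nonzero vectors among (λ_k u_k)). Then the restriction of Ω to the closed linear span of {u_n} is trivial. -/

import Mathlib

open MeasureTheory
open scoped ENNReal

noncomputable section

section L0Defs

variable {α : Type*} [MeasurableSpace α] {μ : Measure α} {q : ℝ≥0∞}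

/-- Two elements of `L_p(μ)` are disjointly supported (up to null sets). -/
def DisjSupp (f g : Lp ℝ q μ) : Prop := ∀ᵐ a ∂μ, f a = 0 ∨ g a = 0

/-- `Ω : L_p(μ) → L⁰(μ)` is trivial on a subspace `E`: some (possibly discontinuous) linear
map `L : E → L⁰` satisfies that `Ω - L` takes values in `L_p` on `E` and is bounded there. -/
def L0TrivialOn (Ω : Lp ℝ q μ → (α →ₘ[μ] ℝ)) (E : Submodule ℝ (Lp ℝ q μ)) : Prop :=
  ∃ (L : E →ₗ[ℝ] (α →ₘ[μ] ℝ)) (C : ℝ), 0 ≤ C ∧ ∀ x : E,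
    eLpNorm (⇑(Ω x - L x)) q μ ≤ ENNReal.ofReal (C * ‖(x : Lp ℝ q μ)‖)

/-- `Ω : L_p(μ) → L⁰(μ)` is an `L_∞`-centralizer with constant `C`: it is homogeneous and,
whenever `y = f·x` in `L⁰` with `f ∈ L_∞` and `x ∈ L_p`, the difference `Ω(f x) - f·Ω(x)`
has `L_p`-norm at most `C‖f‖_∞‖x‖_p` (in particular it lies in `L_p`). -/
def IsCentralizerWith (Ω : Lp ℝ q μ → (α →ₘ[μ] ℝ)) (C : ℝ) : Prop :=
  (∀ (c : ℝ) (x : Lp ℝ q μ), Ω (c • x) = c • Ω x) ∧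
    ∀ f : α →ₘ[μ] ℝ, f ∈ Lp ℝ ⊤ μ → ∀ x y : Lp ℝ q μ, (y : α →ₘ[μ] ℝ) = f * ↑x →
      eLpNorm (⇑(Ω y - f * Ω x)) q μ ≤
        ENNReal.ofReal (C * (eLpNorm (⇑f) ⊤ μ).toReal * ‖x‖)

/-- `Ω` is quasi-linear as a map with values in `L⁰` relative to the `L_p` norm. -/
def L0QuasiLinear (Ω : Lp ℝ q μ → (α →ₘ[μ] ℝ)) : Prop :=
  ∃ Q : ℝ, 0 ≤ Q ∧ ∀ x y : Lp ℝ q μ,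
    eLpNorm (⇑(Ω (x + y) - Ω x - Ω y)) q μ ≤ ENNReal.ofReal (Q * (‖x‖ + ‖y‖))

/-- `Ω` is contractive: `supp Ω(x) ⊆ supp x` a.e. -/
def Contractive (Ω : Lp ℝ q μ → (α →ₘ[μ] ℝ)) : Prop :=
  ∀ x : Lp ℝ q μ, ∀ᵐ a ∂μ, x a = 0 → Ω x a = 0

/-- `Ω` is disjointly singular: its restriction to the closed linear span of every sequence
of nonzero pairwise disjointly supported elements is not trivial. -/
def L0DisjointlySingular [Fact (1 ≤ q)] (Ω : Lp ℝ q μ → (α →ₘ[μ] ℝ)) : Prop :=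
  ∀ u : ℕ → Lp ℝ q μ, (∀ n, u n ≠ 0) → Pairwise (fun i j => DisjSupp (u i) (u j)) →
    ¬ L0TrivialOn Ω (Submodule.span ℝ (Set.range u)).topologicalClosure

/-- The average `∇_{[b]}Ω` over all choices of signs of
`‖Ω (∑ ± b_k) - ∑ ± Ω(b_k)‖_p` (computed in `ℝ≥0∞`). -/
def nabla (Ω : Lp ℝ q μ → (α →ₘ[μ] ℝ)) {n : ℕ} (b : Fin n → Lp ℝ q μ) : ℝ≥0∞ :=
  (2 ^ n : ℝ≥0∞)⁻¹ * ∑ ε : Fin n → Bool,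
    eLpNorm (⇑(Ω (∑ k, (if ε k then (1:ℝ) else -1) • b k)
      - ∑ k, (if ε k then (1:ℝ) else -1) • Ω (b k))) q μ

end L0Defs

section Aux
open Set
open scoped Classical

variable {α : Type*} [MeasurableSpace α] {μ : Measure α} {q : ℝ≥0∞}

theorem lpSum_coeFn {ι : Type*} (s : Finset ι) (f : ι → Lp ℝ q μ) :
    ⇑(∑ i ∈ s, f i) =ᵐ[μ] fun a => ∑ i ∈ s, f i a := by
  classical
  induction s using Finset.induction_on with
  | empty => simp only [Finset.sum_empty]; exact Lp.coeFn_zero (E := ℝ) (p := q) (μ := μ)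
  | insert _ _ hni ih =>
    filter_upwards [Lp.coeFn_add (f _) (∑ i ∈ _, f i), ih] with a h1 h2
    rw [Finset.sum_insert hni, h1, Pi.add_apply, h2, Finset.sum_insert hni]

theorem aeEqFunSum_coeFn {ι : Type*} (s : Finset ι) (f : ι → (α →ₘ[μ] ℝ)) :
    ⇑(∑ i ∈ s, f i) =ᵐ[μ] fun a => ∑ i ∈ s, f i a := by
  classical
  induction s using Finset.induction_on with
  | empty => simp only [Finset.sum_empty]; exact AEEqFun.coeFn_zero (β := ℝ) (μ := μ)
  | insert _ _ hni ih =>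
    filter_upwards [AEEqFun.coeFn_add (f _) (∑ i ∈ _, f i), ih] with a h1 h2
    rw [Finset.sum_insert hni, h1, Pi.add_apply, h2, Finset.sum_insert hni]

/-- Disjointified (measurable) version of the supports of the `u k`. -/
def Tset (u : ℕ → Lp ℝ q μ) (k : ℕ) : Set α :=
  {a | u k a ≠ 0} \ ⋃ j < k, {a | u j a ≠ 0}

theorem measurableSet_Tset (u : ℕ → Lp ℝ q μ) (k : ℕ) : MeasurableSet (Tset u k) := by
  have h : ∀ j, MeasurableSet {a | u j a ≠ 0} := fun j =>
    ((Lp.stronglyMeasurable (u j)).measurable (measurableSet_singleton 0)).compl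
  exact (h k).diff (MeasurableSet.iUnion fun j => MeasurableSet.iUnion fun _ => h j)

theorem Tset_disjoint (u : ℕ → Lp ℝ q μ) : Pairwise (Function.onFun Disjoint (Tset u)) := by
  have key : ∀ i j : ℕ, i < j → Disjoint (Tset u i) (Tset u j) := by
    intro i j hij
    rw [Set.disjoint_left]
    rintro a ⟨hai, -⟩ ⟨-, haj⟩
    exact haj (Set.mem_iUnion₂.mpr ⟨i, hij, hai⟩)
  intro i j hij
  rcases lt_or_gt_of_ne hij with h | h
  · exact key i j h
  · exact (key j i h).symm

theorem Tset_ae (u : ℕ → Lp ℝ q μ) (hdisj : Pairwise (fun i j => DisjSupp (u i) (u j)))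
    (k : ℕ) : ∀ᵐ a ∂μ, a ∉ Tset u k → u k a = 0 := by
  have h : ∀ᵐ a ∂μ, ∀ j, j < k → (u k a = 0 ∨ u j a = 0) := by
    rw [ae_all_iff]
    intro j
    by_cases hj : j < k
    · exact (hdisj (Nat.ne_of_gt hj)).mono fun a ha _ => ha
    · exact Filter.Eventually.of_forall fun a hlt => absurd hlt hj
  filter_upwards [h] with a ha hT
  by_contra hne
  have : a ∈ ⋃ j < k, {a | u j a ≠ 0} := by
    by_contra hc
    exact hT ⟨hne, hc⟩
  rcases Set.mem_iUnion₂.mp this with ⟨j, hj, hja⟩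
  rcases ha j hj with h1 | h2
  · exact hne h1
  · exact hja h2

theorem norm_one_ne_zero_measure (v : Lp ℝ q μ) (h : ‖v‖ = 1) : μ ≠ 0 := by
  intro h0
  subst h0
  rw [Lp.norm_def] at h
  simp [eLpNorm_measure_zero] at h

theorem eLpNorm_eq_lintegral_rpow_nnnorm {f : α → ℝ} (hq0 : q ≠ 0) (hq : q ≠ ∞) :
    eLpNorm f q μ = (∫⁻ a, (‖f a‖₊ : ℝ≥0∞) ^ q.toReal ∂μ) ^ (1 / q.toReal) :=
  eLpNorm_eq_lintegral_rpow_enorm_toReal hq0 hq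

theorem lintegral_rpow_eq_one [Fact (1 ≤ q)] (hq : q ≠ ∞) (v : Lp ℝ q μ) (hv : ‖v‖ = 1) :
    ∫⁻ a, (‖v a‖₊ : ℝ≥0∞) ^ q.toReal ∂μ = 1 := by
  have hq1 : (1:ℝ≥0∞) ≤ q := Fact.out
  have hq0 : q ≠ 0 := (lt_of_lt_of_le zero_lt_one hq1).ne'
  have hp : 0 < q.toReal := ENNReal.toReal_pos hq0 hq
  have h1 : eLpNorm ⇑v q μ = 1 := by
    have h2 := Lp.norm_def v
    rw [hv] at h2
    rw [← ENNReal.ofReal_toReal (Lp.eLpNorm_ne_top v), ← h2]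
    simp
  rw [eLpNorm_eq_lintegral_rpow_nnnorm hq0 hq] at h1
  have h3 := congrArg (· ^ q.toReal) h1
  simpa [← ENNReal.rpow_mul, one_div, inv_mul_cancel₀ hp.ne'] using h3

theorem lintegral_rpow_ne_top [Fact (1 ≤ q)] (hq : q ≠ ∞) (v : Lp ℝ q μ) :
    ∫⁻ a, (‖v a‖₊ : ℝ≥0∞) ^ q.toReal ∂μ ≠ ∞ := by
  have hq1 : (1:ℝ≥0∞) ≤ q := Fact.out
  have hq0 : q ≠ 0 := (lt_of_lt_of_le zero_lt_one hq1).ne'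
  have hp : 0 < q.toReal := ENNReal.toReal_pos hq0 hq
  have h1 := eLpNorm_eq_lintegral_rpow_nnnorm (f := ⇑v) (μ := μ) hq0 hq
  have h3 := congrArg (· ^ q.toReal) h1
  simp only [← ENNReal.rpow_mul, one_div, inv_mul_cancel₀ hp.ne', ENNReal.rpow_one] at h3
  rw [← h3]
  exact (ENNReal.rpow_lt_top_of_nonneg hp.le (Lp.eLpNorm_ne_top v)).ne

/-- The `ℓ_p` norm of the coefficients is at most the norm of the disjoint combination. -/
theorem coeff_norm_le [Fact (1 ≤ q)] (hq : q ≠ ∞)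
    (u : ℕ → Lp ℝ q μ) (hnorm : ∀ n, ‖u n‖ = 1)
    (hdisj : Pairwise (fun i j => DisjSupp (u i) (u j)))
    (n : ℕ) (lam : Fin n → ℝ) :
    (∑ k : Fin n, |lam k| ^ q.toReal) ^ (1 / q.toReal) ≤ ‖∑ k : Fin n, lam k • u (k:ℕ)‖ := by
  have hq1 : (1:ℝ≥0∞) ≤ q := Fact.out
  have hq0 : q ≠ 0 := (lt_of_lt_of_le zero_lt_one hq1).ne'
  have hp : 0 < q.toReal := ENNReal.toReal_pos hq0 hq
  set p := q.toReal with hpdef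
  set w : Lp ℝ q μ := ∑ k : Fin n, lam k • u (k:ℕ) with hwdef
  set T : ℕ → Set α := Tset u with hTdef
  have hTm : ∀ k, MeasurableSet (T k) := measurableSet_Tset u
  have hTd := Tset_disjoint u
  have hTae := Tset_ae u hdisj
  have hw : ⇑w =ᵐ[μ] fun a => ∑ k : Fin n, lam k * u (k:ℕ) a := by
    filter_upwards [lpSum_coeFn Finset.univ (fun k : Fin n => lam k • u (k:ℕ)),
      ae_all_iff.mpr (fun k : Fin n => Lp.coeFn_smul (lam k) (u (k:ℕ)))] with a h1 h2
    rw [h1]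
    exact Finset.sum_congr rfl fun k _ => by rw [h2 k]; simp
  have hU : ∀ᵐ a ∂μ, ∀ k : Fin n, a ∉ T (k:ℕ) → u (k:ℕ) a = 0 :=
    ae_all_iff.mpr fun k => hTae (k:ℕ)
  -- integral of u k over T k is 1
  have hrestrict : ∀ k : Fin n, ∫⁻ a in T (k:ℕ), (‖u (k:ℕ) a‖₊ : ℝ≥0∞) ^ p ∂μ = 1 := by
    intro k
    have h0 : ∫⁻ a in (T (k:ℕ))ᶜ, (‖u (k:ℕ) a‖₊ : ℝ≥0∞) ^ p ∂μ = 0 := by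
      have hz : ∀ᵐ a ∂(μ.restrict (T (k:ℕ))ᶜ), (‖u (k:ℕ) a‖₊ : ℝ≥0∞) ^ p = 0 := by
        rw [ae_restrict_iff' (hTm (k:ℕ)).compl]
        filter_upwards [hTae (k:ℕ)] with a h ha
        rw [h ha]
        simp [ENNReal.zero_rpow_of_pos hp]
      rw [lintegral_congr_ae hz, lintegral_zero]
    have := lintegral_add_compl (fun a => (‖u (k:ℕ) a‖₊ : ℝ≥0∞) ^ p) (hTm (k:ℕ)) (μ := μ)
    rw [h0, add_zero] at this
    rw [this, lintegral_rpow_eq_one hq (u (k:ℕ)) (hnorm _)]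
  -- integral of w over T k
  have hwT : ∀ k : Fin n, ∫⁻ a in T (k:ℕ), (‖⇑w a‖₊ : ℝ≥0∞) ^ p ∂μ
      = ENNReal.ofReal (|lam k| ^ p) := by
    intro k
    have hcg : ∀ᵐ a ∂(μ.restrict (T (k:ℕ))),
        (‖⇑w a‖₊ : ℝ≥0∞) ^ p = (‖lam k‖₊ : ℝ≥0∞) ^ p * (‖u (k:ℕ) a‖₊ : ℝ≥0∞) ^ p := by
      rw [ae_restrict_iff' (hTm (k:ℕ))]
      filter_upwards [hw, hU] with a h1 h2 ha
      have hwa : ⇑w a = lam k * u (k:ℕ) a := by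
        rw [h1]
        refine Finset.sum_eq_single k (fun j _ hj => ?_) (by simp)
        have hja : a ∉ T (j:ℕ) := fun hja =>
          Set.disjoint_left.mp (hTd (by simpa using Fin.val_ne_of_ne hj)) hja ha
        rw [h2 j hja, mul_zero]
      rw [hwa, nnnorm_mul, ENNReal.coe_mul, ENNReal.mul_rpow_of_nonneg _ _ hp.le]
    rw [lintegral_congr_ae hcg, lintegral_const_mul _ (((Lp.stronglyMeasurable (u (k:ℕ))).measurable.nnnorm).coe_nnreal_ennreal.pow_const p), hrestrict k, mul_one,
      (show ((‖lam k‖₊ : ℝ≥0∞)) = ENNReal.ofReal |lam k| from Real.enorm_eq_ofReal_abs _), ← ENNReal.ofReal_rpow_of_nonneg (abs_nonneg _) hp.le]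
  -- sum over k
  have hsum_le : ∑ k : Fin n, ENNReal.ofReal (|lam k| ^ p)
      ≤ ∫⁻ a, (‖⇑w a‖₊ : ℝ≥0∞) ^ p ∂μ := by
    have hd : (↑(Finset.univ : Finset (Fin n)) : Set (Fin n)).PairwiseDisjoint
        (fun k : Fin n => T (k:ℕ)) := fun i _ j _ hij =>
      hTd (by simpa using Fin.val_ne_of_ne hij)
    calc ∑ k : Fin n, ENNReal.ofReal (|lam k| ^ p)
        = ∑ k : Fin n, ∫⁻ a in T (k:ℕ), (‖⇑w a‖₊ : ℝ≥0∞) ^ p ∂μ := by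
          exact Finset.sum_congr rfl fun k _ => (hwT k).symm
      _ = ∫⁻ a in ⋃ k ∈ (Finset.univ : Finset (Fin n)), T (k:ℕ), (‖⇑w a‖₊ : ℝ≥0∞) ^ p ∂μ :=
          (lintegral_biUnion_finset hd (fun k _ => hTm (k:ℕ)) _).symm
      _ ≤ ∫⁻ a, (‖⇑w a‖₊ : ℝ≥0∞) ^ p ∂μ := setLIntegral_le_lintegral _ _
  -- conclude
  set I := ∫⁻ a, (‖⇑w a‖₊ : ℝ≥0∞) ^ p ∂μ with hIdef
  have hIne : I ≠ ∞ := lintegral_rpow_ne_top hq w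
  have key : ∑ k : Fin n, |lam k| ^ p ≤ I.toReal := by
    rw [← ENNReal.ofReal_le_iff_le_toReal hIne,
      ENNReal.ofReal_sum_of_nonneg (fun i _ => Real.rpow_nonneg (abs_nonneg _) p)]
    exact hsum_le
  have hnormw : ‖w‖ = I.toReal ^ (1 / p) := by
    rw [Lp.norm_def, eLpNorm_eq_lintegral_rpow_nnnorm hq0 hq, ENNReal.toReal_rpow]
  rw [hnormw]
  exact Real.rpow_le_rpow (Finset.sum_nonneg fun i _ => Real.rpow_nonneg (abs_nonneg _) p)
    key (by positivity)

set_option maxHeartbeats 2000000 in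
theorem finEst [Fact (1 ≤ q)] (hq : q ≠ ∞)
    (Ω : Lp ℝ q μ → (α →ₘ[μ] ℝ)) (CΩ : ℝ)
    (hcen : IsCentralizerWith Ω CΩ) (hcontr : Contractive Ω)
    (u : ℕ → Lp ℝ q μ) (hnorm : ∀ n, ‖u n‖ = 1)
    (hdisj : Pairwise (fun i j => DisjSupp (u i) (u j)))
    (C : ℝ) (hC : 0 < C)
    (hnabla : ∀ (m : ℕ) (lam : Fin m → ℝ),
      nabla Ω (fun k : Fin m => lam k • u (k : ℕ)) ≤
        ENNReal.ofReal (C * (∑ k : Fin m, |lam k| ^ q.toReal) ^ (1 / q.toReal)))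
    (n : ℕ) (lam : Fin n → ℝ) :
    eLpNorm (⇑(Ω (∑ k : Fin n, lam k • u (k:ℕ)) - ∑ k : Fin n, lam k • Ω (u (k:ℕ)))) q μ
      ≤ ENNReal.ofReal ((|CΩ| + C) * ‖∑ k : Fin n, lam k • u (k:ℕ)‖) := by
  have hq1 : (1:ℝ≥0∞) ≤ q := Fact.out
  have hq0 : q ≠ 0 := (lt_of_lt_of_le zero_lt_one hq1).ne'
  have hp : 0 < q.toReal := ENNReal.toReal_pos hq0 hq
  have hμ : μ ≠ 0 := norm_one_ne_zero_measure (u 0) (hnorm 0)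
  set T : ℕ → Set α := Tset u with hTdef
  have hTm : ∀ k, MeasurableSet (T k) := measurableSet_Tset u
  have hTd := Tset_disjoint u
  have hTae := Tset_ae u hdisj
  have hΩT : ∀ k : ℕ, ∀ᵐ a ∂μ, a ∉ T k → Ω (u k) a = 0 := by
    intro k
    filter_upwards [hcontr (u k), hTae k] with a h1 h2 ha
    exact h1 (h2 ha)
  set w : Lp ℝ q μ := ∑ k : Fin n, lam k • u (k:ℕ) with hwdef
  have hw : ⇑w =ᵐ[μ] fun a => ∑ k : Fin n, lam k * u (k:ℕ) a := by
    filter_upwards [lpSum_coeFn Finset.univ (fun k : Fin n => lam k • u (k:ℕ)),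
      ae_all_iff.mpr (fun k : Fin n => Lp.coeFn_smul (lam k) (u (k:ℕ)))] with a h1 h2
    rw [h1]
    exact Finset.sum_congr rfl fun k _ => by rw [h2 k]; simp
  have hU : ∀ᵐ a ∂μ, ∀ k : Fin n, a ∉ T (k:ℕ) → u (k:ℕ) a = 0 :=
    ae_all_iff.mpr fun k => hTae (k:ℕ)
  have hΩU : ∀ᵐ a ∂μ, ∀ k : Fin n, a ∉ T (k:ℕ) → Ω (u (k:ℕ)) a = 0 :=
    ae_all_iff.mpr fun k => hΩT (k:ℕ)
  -- sign data
  set e : (Fin n → Bool) → Fin n → ℝ := fun ε k => if ε k then (1:ℝ) else -1 with hedef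
  have he_sq : ∀ ε k, e ε k * e ε k = 1 := by
    intro ε k; by_cases h : ε k <;> simp [hedef, h]
  set wε : (Fin n → Bool) → Lp ℝ q μ :=
    fun ε => ∑ k : Fin n, (if ε k then (1:ℝ) else -1) • (lam k • u (k:ℕ)) with hwεdef
  have hwε : ∀ ε, ⇑(wε ε) =ᵐ[μ] fun a => ∑ k : Fin n, e ε k * (lam k * u (k:ℕ) a) := by
    intro ε
    filter_upwards [lpSum_coeFn Finset.univ
        (fun k : Fin n => (if ε k then (1:ℝ) else -1) • (lam k • u (k:ℕ))),
      ae_all_iff.mpr (fun k : Fin n =>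
        Lp.coeFn_smul ((if ε k then (1:ℝ) else -1) * lam k) (u (k:ℕ)))] with a h1 h2
    rw [h1]
    refine Finset.sum_congr rfl fun k _ => ?_
    rw [smul_smul, h2 k]
    simp [hedef, mul_assoc]
  -- the multiplier function
  set B : (Fin n → Bool) → Set α := fun ε => ⋃ (k : Fin n) (_ : ε k = false), T (k:ℕ) with hBdef
  have hBm : ∀ ε, MeasurableSet (B ε) :=
    fun ε => MeasurableSet.iUnion fun k => MeasurableSet.iUnion fun _ => hTm _
  set hfun : (Fin n → Bool) → α → ℝ := fun ε a => if a ∈ B ε then -1 else 1 with hfdef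
  have hfm : ∀ ε, Measurable (hfun ε) :=
    fun ε => Measurable.ite (hBm ε) measurable_const measurable_const
  have hf_norm : ∀ ε a, ‖hfun ε a‖ = 1 := by
    intro ε a; by_cases h : a ∈ B ε <;> simp [hfdef, h]
  have hf_eqT : ∀ ε (k : Fin n), ∀ a ∈ T (k:ℕ), hfun ε a = e ε k := by
    intro ε k a ha
    cases hεk : ε k with
    | false =>
      have : a ∈ B ε := Set.mem_iUnion₂.mpr ⟨k, hεk, ha⟩
      simp [hfdef, this, hedef, hεk]
    | true =>
      have : a ∉ B ε := by
        intro hB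
        rcases Set.mem_iUnion₂.mp hB with ⟨j, hjf, hja⟩
        have hjk : j ≠ k := fun h => by rw [h, hεk] at hjf; exact Bool.noConfusion hjf
        exact Set.disjoint_left.mp (hTd (by simpa using Fin.val_ne_of_ne hjk)) hja ha
      simp [hfdef, this, hedef, hεk]

  -- F ε as an AEEqFun with ess-sup norm ≤ 1
  set F : (Fin n → Bool) → (α →ₘ[μ] ℝ) :=
    fun ε => AEEqFun.mk (hfun ε) (hfm ε).aestronglyMeasurable with hFdef
  have hcoeF : ∀ ε, ⇑(F ε) =ᵐ[μ] hfun ε := fun ε => AEEqFun.coeFn_mk _ _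
  have hFsnorm : ∀ ε, eLpNorm ⇑(F ε) ⊤ μ ≤ 1 := by
    intro ε
    rw [eLpNorm_congr_ae (hcoeF ε), eLpNorm_exponent_top]
    refine (eLpNormEssSup_le_of_ae_bound (C := 1)
      (Filter.Eventually.of_forall fun a => le_of_eq (hf_norm ε a))).trans ?_
    simp
  have hFmem : ∀ ε, F ε ∈ Lp ℝ ⊤ μ := fun ε =>
    Lp.mem_Lp_iff_eLpNorm_lt_top.mpr ((hFsnorm ε).trans_lt ENNReal.one_lt_top)
  have hFt : ∀ ε, (eLpNorm ⇑(F ε) ⊤ μ).toReal ≤ 1 := by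
    intro ε
    have := ENNReal.toReal_mono ENNReal.one_ne_top (hFsnorm ε)
    simpa using this
  -- w = F ε * wε
  have hxw : ∀ ε, (↑w : α →ₘ[μ] ℝ) = F ε * ↑(wε ε) := by
    intro ε
    apply AEEqFun.ext
    filter_upwards [hw, hwε ε, AEEqFun.coeFn_mul (F ε) ↑(wε ε), hcoeF ε, hU]
      with a h1 h2 h3 h4 h5
    rw [h3, Pi.mul_apply, h4]
    show ⇑w a = hfun ε a * ⇑(wε ε) a
    rw [h1, h2, Finset.mul_sum]
    refine Finset.sum_congr rfl fun k _ => ?_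
    by_cases hz : u (k:ℕ) a = 0
    · rw [hz]; ring
    · have haT : a ∈ T (k:ℕ) := by
        by_contra hc
        exact hz (h5 k hc)
      rw [hf_eqT ε k a haT, ← mul_assoc, ← mul_assoc, he_sq ε k, one_mul]
  -- pointwise relation between w and wε
  have hwmul : ∀ ε, ∀ᵐ a ∂μ, ⇑w a = hfun ε a * ⇑(wε ε) a := by
    intro ε
    have := hxw ε
    have h2 : ⇑w =ᵐ[μ] ⇑(F ε * ↑(wε ε)) := by rw [← this]
    filter_upwards [h2, AEEqFun.coeFn_mul (F ε) ↑(wε ε), hcoeF ε] with a ha hb hc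
    rw [ha, hb, Pi.mul_apply, hc]
  have hnormwε : ∀ ε, ‖wε ε‖ = ‖w‖ := by
    intro ε
    rw [Lp.norm_def, Lp.norm_def]
    congr 1
    apply eLpNorm_congr_norm_ae
    filter_upwards [hwmul ε] with a ha
    rw [ha, norm_mul, hf_norm ε a, one_mul]
  -- centralizer estimate
  have bound1 : ∀ ε, eLpNorm (⇑(Ω w - F ε * Ω (wε ε))) q μ
      ≤ ENNReal.ofReal (|CΩ| * ‖w‖) := by
    intro ε
    refine (hcen.2 (F ε) (hFmem ε) (wε ε) w (hxw ε)).trans (ENNReal.ofReal_le_ofReal ?_)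
    rw [hnormwε ε]
    have h1 := hFt ε
    have h2 : (0:ℝ) ≤ (eLpNorm ⇑(F ε) ⊤ μ).toReal := ENNReal.toReal_nonneg
    have h3 : (0:ℝ) ≤ ‖w‖ := norm_nonneg _
    calc CΩ * (eLpNorm ⇑(F ε) ⊤ μ).toReal * ‖w‖
        ≤ |CΩ| * (eLpNorm ⇑(F ε) ⊤ μ).toReal * ‖w‖ :=
          mul_le_mul_of_nonneg_right (mul_le_mul_of_nonneg_right (le_abs_self CΩ) h2) h3
      _ ≤ |CΩ| * 1 * ‖w‖ :=
          mul_le_mul_of_nonneg_right (mul_le_mul_of_nonneg_left h1 (abs_nonneg CΩ)) h3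
      _ = |CΩ| * ‖w‖ := by ring
  -- decomposition
  set X : α →ₘ[μ] ℝ := Ω w - ∑ k : Fin n, lam k • Ω (u (k:ℕ)) with hXdef
  set Z : (Fin n → Bool) → (α →ₘ[μ] ℝ) := fun ε =>
    Ω (wε ε) - ∑ k : Fin n, (if ε k then (1:ℝ) else -1) • Ω (lam k • u (k:ℕ)) with hZdef
  have hZ' : ∀ ε, Z ε = Ω (wε ε) - ∑ k : Fin n, (e ε k * lam k) • Ω (u (k:ℕ)) := by
    intro ε
    show Ω (wε ε) - ∑ k : Fin n, (if ε k then (1:ℝ) else -1) • Ω (lam k • u (k:ℕ))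
      = Ω (wε ε) - ∑ k : Fin n, (e ε k * lam k) • Ω (u (k:ℕ))
    congr 1
    refine Finset.sum_congr rfl fun k _ => ?_
    rw [hcen.1, smul_smul]
  have hZcoe : ∀ ε, ⇑(Z ε) =ᵐ[μ]
      fun a => ⇑(Ω (wε ε)) a - ∑ k : Fin n, (e ε k * lam k) * ⇑(Ω (u (k:ℕ))) a := by
    intro ε
    rw [hZ' ε]
    filter_upwards [AEEqFun.coeFn_sub (Ω (wε ε))
        (∑ k : Fin n, (e ε k * lam k) • Ω (u (k:ℕ))),
      aeEqFunSum_coeFn Finset.univ (fun k : Fin n => (e ε k * lam k) • Ω (u (k:ℕ))),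
      ae_all_iff.mpr (fun k : Fin n => AEEqFun.coeFn_smul (e ε k * lam k) (Ω (u (k:ℕ))))]
      with a h1 h2 h3
    rw [h1, Pi.sub_apply, h2]
    congr 1
    exact Finset.sum_congr rfl fun k _ => by rw [h3 k]; simp
  have hdecomp : ∀ ε, ⇑X =ᵐ[μ]
      fun a => ⇑(Ω w - F ε * Ω (wε ε)) a + hfun ε a * ⇑(Z ε) a := by
    intro ε
    filter_upwards [AEEqFun.coeFn_sub (Ω w) (∑ k : Fin n, lam k • Ω (u (k:ℕ))),
      AEEqFun.coeFn_sub (Ω w) (F ε * Ω (wε ε)),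
      AEEqFun.coeFn_mul (F ε) (Ω (wε ε)), hcoeF ε,
      aeEqFunSum_coeFn Finset.univ (fun k : Fin n => lam k • Ω (u (k:ℕ))),
      ae_all_iff.mpr (fun k : Fin n => AEEqFun.coeFn_smul (lam k) (Ω (u (k:ℕ)))),
      hZcoe ε, hΩU] with a h1 h2 h3 h4 h5 h6 h7 h8
    rw [h1, Pi.sub_apply, h5, h2, Pi.sub_apply, h3, Pi.mul_apply, h4, h7]
    have hkey : ∀ k : Fin n, lam k * ⇑(Ω (u (k:ℕ))) a
        = hfun ε a * ((e ε k * lam k) * ⇑(Ω (u (k:ℕ))) a) := by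
      intro k
      by_cases hz : ⇑(Ω (u (k:ℕ))) a = 0
      · rw [hz]; ring
      · have haT : a ∈ T (k:ℕ) := by
          by_contra hc
          exact hz (h8 k hc)
        rw [hf_eqT ε k a haT, ← mul_assoc, ← mul_assoc, he_sq ε k, one_mul]
    have hsum : ∑ k : Fin n, (lam k • Ω (u (k:ℕ))) a
        = hfun ε a * ∑ k : Fin n, (e ε k * lam k) * ⇑(Ω (u (k:ℕ))) a := by
      rw [Finset.mul_sum]
      refine Finset.sum_congr rfl fun k _ => ?_
      rw [h6 k, Pi.smul_apply, smul_eq_mul]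
      exact hkey k
    rw [hsum]
    ring
  -- triangle inequality for each sign pattern
  have hkey : ∀ ε, eLpNorm ⇑X q μ ≤ ENNReal.ofReal (|CΩ| * ‖w‖) + eLpNorm ⇑(Z ε) q μ := by
    intro ε
    have h3 : eLpNorm (fun a => hfun ε a * ⇑(Z ε) a) q μ = eLpNorm ⇑(Z ε) q μ :=
      eLpNorm_congr_norm_ae (Filter.Eventually.of_forall fun a => by
        rw [norm_mul, hf_norm ε a, one_mul])
    calc eLpNorm ⇑X q μ
        = eLpNorm (⇑(Ω w - F ε * Ω (wε ε)) + fun a => hfun ε a * ⇑(Z ε) a) q μ :=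
          eLpNorm_congr_ae (hdecomp ε)
      _ ≤ eLpNorm (⇑(Ω w - F ε * Ω (wε ε))) q μ
            + eLpNorm (fun a => hfun ε a * ⇑(Z ε) a) q μ :=
          eLpNorm_add_le (AEEqFun.aestronglyMeasurable _)
            ((hfm ε).aestronglyMeasurable.mul (AEEqFun.aestronglyMeasurable _)) hq1
      _ ≤ ENNReal.ofReal (|CΩ| * ‖w‖) + eLpNorm ⇑(Z ε) q μ := by
          rw [h3]
          exact add_le_add_left (bound1 ε) _
  -- averaging over all sign patterns
  have h2n0 : ((2:ℝ≥0∞) ^ n) ≠ 0 := pow_ne_zero n (by norm_num)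
  have h2nt : ((2:ℝ≥0∞) ^ n) ≠ ∞ := ENNReal.pow_ne_top (by norm_num)
  have hsumineq := Finset.sum_le_sum (fun ε (_ : ε ∈ (Finset.univ : Finset (Fin n → Bool))) =>
    hkey ε)
  rw [Finset.sum_const, Finset.sum_add_distrib, Finset.sum_const, Finset.card_univ] at hsumineq
  have hcard : (Fintype.card (Fin n → Bool)) = 2 ^ n := by
    simp [Fintype.card_fun]
  rw [hcard] at hsumineq
  have hmain : eLpNorm ⇑X q μ ≤ ENNReal.ofReal (|CΩ| * ‖w‖)
      + nabla Ω (fun k : Fin n => lam k • u (k:ℕ)) := by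
    have hmul : ((2:ℝ≥0∞) ^ n) * eLpNorm ⇑X q μ
        ≤ (2:ℝ≥0∞) ^ n * ENNReal.ofReal (|CΩ| * ‖w‖) + ∑ ε, eLpNorm ⇑(Z ε) q μ := by
      simpa [nsmul_eq_mul] using hsumineq
    have hX : eLpNorm ⇑X q μ = ((2:ℝ≥0∞) ^ n)⁻¹ * (((2:ℝ≥0∞) ^ n) * eLpNorm ⇑X q μ) := by
      rw [← mul_assoc, ENNReal.inv_mul_cancel h2n0 h2nt, one_mul]
    rw [hX]
    calc ((2:ℝ≥0∞) ^ n)⁻¹ * (((2:ℝ≥0∞) ^ n) * eLpNorm ⇑X q μ)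
        ≤ ((2:ℝ≥0∞) ^ n)⁻¹ * ((2:ℝ≥0∞) ^ n * ENNReal.ofReal (|CΩ| * ‖w‖)
            + ∑ ε, eLpNorm ⇑(Z ε) q μ) := mul_le_mul_right hmul _
      _ = ENNReal.ofReal (|CΩ| * ‖w‖) + nabla Ω (fun k : Fin n => lam k • u (k:ℕ)) := by
          rw [mul_add, ← mul_assoc, ENNReal.inv_mul_cancel h2n0 h2nt, one_mul]
          congr 1
  refine hmain.trans ?_
  rw [show (|CΩ| + C) * ‖w‖ = |CΩ| * ‖w‖ + C * ‖w‖ by ring,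
    ENNReal.ofReal_add (mul_nonneg (abs_nonneg _) (norm_nonneg _))
      (mul_nonneg hC.le (norm_nonneg _))]
  refine add_le_add_right ?_ _
  refine (hnabla n lam).trans (ENNReal.ofReal_le_ofReal ?_)
  exact mul_le_mul_of_nonneg_left (coeff_norm_le hq u hnorm hdisj n lam) hC.le


section Ind
variable [Fact (1 ≤ q)]

/-- Multiplication by the indicator of a measurable set, as a continuous linear map on `Lp`. -/
def indicatorCLM (s : Set α) (hs : MeasurableSet s) : Lp ℝ q μ →L[ℝ] Lp ℝ q μ := by
  refine LinearMap.mkContinuous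
    { toFun := fun x => ((Lp.memLp x).indicator hs).toLp (s.indicator ⇑x)
      map_add' := ?_
      map_smul' := ?_ } 1 ?_
  · intro x y
    apply Lp.ext
    filter_upwards [MemLp.coeFn_toLp (f := s.indicator ⇑(x + y)) (((Lp.memLp (x + y))).indicator hs),
      MemLp.coeFn_toLp (f := s.indicator ⇑x) ((Lp.memLp x).indicator hs),
      MemLp.coeFn_toLp (f := s.indicator ⇑y) ((Lp.memLp y).indicator hs),
      Lp.coeFn_add x y, Lp.coeFn_add (((Lp.memLp x).indicator hs).toLp (s.indicator ⇑x))
        (((Lp.memLp y).indicator hs).toLp (s.indicator ⇑y))] with a h1 h2 h3 h4 h5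
    rw [h1, h5, Pi.add_apply, h2, h3]
    by_cases ha : a ∈ s
    · rw [Set.indicator_of_mem ha, Set.indicator_of_mem ha, Set.indicator_of_mem ha]
      exact h4
    · rw [Set.indicator_of_notMem ha, Set.indicator_of_notMem ha,
        Set.indicator_of_notMem ha, add_zero]
  · intro c x
    apply Lp.ext
    filter_upwards [MemLp.coeFn_toLp (f := s.indicator ⇑(c • x)) (((Lp.memLp (c • x))).indicator hs),
      MemLp.coeFn_toLp (f := s.indicator ⇑x) ((Lp.memLp x).indicator hs),
      Lp.coeFn_smul c x, Lp.coeFn_smul c (((Lp.memLp x).indicator hs).toLp (s.indicator ⇑x))]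
      with a h1 h2 h3 h4
    rw [h1, RingHom.id_apply, h4, Pi.smul_apply, h2]
    by_cases ha : a ∈ s
    · rw [Set.indicator_of_mem ha, Set.indicator_of_mem ha]
      exact h3
    · rw [Set.indicator_of_notMem ha, Set.indicator_of_notMem ha, smul_zero]
  · intro x
    simp only [LinearMap.coe_mk, AddHom.coe_mk]
    rw [one_mul, Lp.norm_def, Lp.norm_def,
      eLpNorm_congr_ae (MemLp.coeFn_toLp (f := s.indicator ⇑x) ((Lp.memLp x).indicator hs))]
    exact ENNReal.toReal_mono (Lp.eLpNorm_ne_top x) (eLpNorm_indicator_le _)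

end Ind
section Ind2
variable [Fact (1 ≤ q)]
theorem indicatorCLM_coeFn (s : Set α) (hs : MeasurableSet s) (x : Lp ℝ q μ) :
    ⇑(indicatorCLM (μ := μ) (q := q) s hs x) =ᵐ[μ] s.indicator ⇑x :=
  MemLp.coeFn_toLp (f := s.indicator ⇑x) ((Lp.memLp x).indicator hs)
end Ind2

theorem lintegral_rpow_eq_eLpNorm_rpow [Fact (1 ≤ q)] (hq : q ≠ ∞) (f : α → ℝ) :
    ∫⁻ a, (‖f a‖₊ : ℝ≥0∞) ^ q.toReal ∂μ = (eLpNorm f q μ) ^ q.toReal := by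
  have hq1 : (1:ℝ≥0∞) ≤ q := Fact.out
  have hq0 : q ≠ 0 := (lt_of_lt_of_le zero_lt_one hq1).ne'
  have hp : 0 < q.toReal := ENNReal.toReal_pos hq0 hq
  rw [eLpNorm_eq_lintegral_rpow_nnnorm hq0 hq, ← ENNReal.rpow_mul, one_div,
    inv_mul_cancel₀ hp.ne', ENNReal.rpow_one]

section Main

variable [Fact (1 ≤ q)]

set_option maxHeartbeats 2000000 in
set_option synthInstance.maxHeartbeats 400000 in
theorem main_statement (hq : q ≠ ∞)
    (Ω : Lp ℝ q μ → (α →ₘ[μ] ℝ)) (CΩ : ℝ)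
    (hcen : IsCentralizerWith Ω CΩ) (hcontr : Contractive Ω)
    (u : ℕ → Lp ℝ q μ) (hnorm : ∀ n, ‖u n‖ = 1)
    (hdisj : Pairwise (fun i j => DisjSupp (u i) (u j)))
    (C : ℝ) (hC : 0 < C)
    (hnabla : ∀ (m : ℕ) (lam : Fin m → ℝ),
      nabla Ω (fun k : Fin m => lam k • u (k : ℕ)) ≤
        ENNReal.ofReal (C * (∑ k : Fin m, |lam k| ^ q.toReal) ^ (1 / q.toReal))) :
    ∃ (L : (Submodule.span ℝ (Set.range u)).topologicalClosure →ₗ[ℝ] (α →ₘ[μ] ℝ)) (K : ℝ),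
      0 ≤ K ∧ ∀ x : (Submodule.span ℝ (Set.range u)).topologicalClosure,
      eLpNorm (⇑(Ω x - L x)) q μ ≤ ENNReal.ofReal (K * ‖(x : Lp ℝ q μ)‖) := by
  have hq1 : (1:ℝ≥0∞) ≤ q := Fact.out
  have hq0 : q ≠ 0 := (lt_of_lt_of_le zero_lt_one hq1).ne'
  have hp : 0 < q.toReal := ENNReal.toReal_pos hq0 hq
  set p := q.toReal with hpdef
  set E := (Submodule.span ℝ (Set.range u)).topologicalClosure with hEdef
  set T : ℕ → Set α := Tset u with hTdef
  have hTm : ∀ k, MeasurableSet (T k) := measurableSet_Tset u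
  have hTd := Tset_disjoint u
  have hTae := Tset_ae u hdisj
  have hΩT : ∀ k : ℕ, ∀ᵐ a ∂μ, a ∉ T k → Ω (u k) a = 0 := by
    intro k
    filter_upwards [hcontr (u k), hTae k] with a h1 h2 ha
    exact h1 (h2 ha)
  set A : Set α := ⋃ k, T k with hAdef
  have hAm : MeasurableSet A := MeasurableSet.iUnion hTm
  have hu0 : ∀ k, u k ≠ 0 := by
    intro k h
    have := hnorm k
    rw [h, norm_zero] at this
    norm_num at this
  -- u j vanishes a.e. on T k for j ≠ k
  have hvan : ∀ j k : ℕ, j ≠ k → ∀ᵐ a ∂μ, a ∈ T k → u j a = 0 := by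
    intro j k hjk
    filter_upwards [hTae j] with a h ha
    exact h fun hTj => Set.disjoint_left.mp (hTd hjk) hTj ha
  set M : ℕ → (Lp ℝ q μ →L[ℝ] Lp ℝ q μ) := fun k => indicatorCLM (T k) (hTm k) with hMdef
  have hMcoe : ∀ (k : ℕ) (x : Lp ℝ q μ), ⇑(M k x) =ᵐ[μ] (T k).indicator ⇑x := fun k x =>
    indicatorCLM_coeFn (T k) (hTm k) x
  -- the coefficient of x on T k
  have hMspan : ∀ k : ℕ, ∀ y ∈ Submodule.span ℝ (Set.range u),
      M k y ∈ Submodule.span ℝ {u k} := by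
    intro k y hy
    induction hy using Submodule.span_induction with
    | mem z hz =>
      rcases hz with ⟨j, rfl⟩
      by_cases hjk : j = k
      · subst hjk
        have : M j (u j) = u j := by
          apply Lp.ext
          filter_upwards [hMcoe j (u j), hTae j] with a h1 h2
          rw [h1]
          by_cases ha : a ∈ T j
          · rw [Set.indicator_of_mem ha]
          · rw [Set.indicator_of_notMem ha, h2 ha]
        rw [this]
        exact Submodule.subset_span rfl
      · have : M k (u j) = 0 := by
          apply Lp.ext
          filter_upwards [hMcoe k (u j), hvan j k hjk,
            Lp.coeFn_zero (E := ℝ) (p := q) (μ := μ)] with a h1 h2 h3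
          rw [h1, h3, Pi.zero_apply]
          by_cases ha : a ∈ T k
          · rw [Set.indicator_of_mem ha]
            exact h2 ha
          · rw [Set.indicator_of_notMem ha]
        rw [this]
        exact Submodule.zero_mem _
    | zero => rw [map_zero]; exact Submodule.zero_mem _
    | add z w _ _ hz hw => rw [map_add]; exact Submodule.add_mem _ hz hw
    | smul c z _ hz => rw [_root_.map_smul]; exact Submodule.smul_mem _ c hz
  have hMclosure : ∀ k : ℕ, ∀ x : E, M k ↑x ∈ Submodule.span ℝ {u k} := by
    intro k x
    have hclosed : IsClosed ((Submodule.span ℝ {u k} : Submodule ℝ (Lp ℝ q μ)) : Set (Lp ℝ q μ)) :=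
      Submodule.closed_of_finiteDimensional _
    have hle : E ≤ (Submodule.span ℝ {u k}).comap (M k).toLinearMap := by
      apply Submodule.topologicalClosure_minimal
      · intro y hy
        exact hMspan k y hy
      · exact hclosed.preimage (M k).continuous
    exact hle x.2
  -- coefficients
  have hexists : ∀ (k : ℕ) (x : E), ∃ c : ℝ, c • u k = M k ↑x := fun k x =>
    Submodule.mem_span_singleton.mp (hMclosure k x)
  set coef : ℕ → E → ℝ := fun k x => (hexists k x).choose with hcoefdef
  have hcoef : ∀ (k : ℕ) (x : E), coef k x • u k = M k ↑x := fun k x =>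
    (hexists k x).choose_spec
  have huniq : ∀ (k : ℕ) (c c' : ℝ), c • u k = c' • u k → c = c' := fun k c c' h =>
    smul_left_injective ℝ (hu0 k) h
  have hcoef_add : ∀ (k : ℕ) (x y : E), coef k (x + y) = coef k x + coef k y := by
    intro k x y
    apply huniq k
    rw [add_smul, hcoef, hcoef, hcoef]
    rw [Submodule.coe_add, map_add]
  have hcoef_smul : ∀ (k : ℕ) (c : ℝ) (x : E), coef k (c • x) = c * coef k x := by
    intro k c x
    apply huniq k
    rw [hcoef, mul_smul, hcoef, ← _root_.map_smul]
    rfl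
  -- the linear map L
  set g : ℕ → α → ℝ := fun k => ⇑(Ω (u k)) with hgdef
  have hgm : ∀ k, Measurable (g k) := fun k => (Ω (u k)).measurable
  set G : E → α → ℝ := fun x a => ∑' k, (T k).indicator (fun b => coef k x * g k b) a
    with hGdef
  have hG_off : ∀ (x : E) (a : α), a ∉ A → G x a = 0 := by
    intro x a ha
    have h0 : ∀ k, (T k).indicator (fun b => coef k x * g k b) a = 0 := fun k =>
      Set.indicator_of_notMem (fun hk => ha (Set.mem_iUnion.mpr ⟨k, hk⟩)) _
    exact (tsum_congr h0).trans tsum_zero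
  have hG_on : ∀ (x : E) (k : ℕ) (a : α), a ∈ T k → G x a = coef k x * g k a := by
    intro x k a ha
    have h1 : ∀ j, j ≠ k → (T j).indicator (fun b => coef j x * g j b) a = 0 := by
      intro j hj
      exact Set.indicator_of_notMem (fun hja => Set.disjoint_left.mp (hTd hj) hja ha) _
    exact (tsum_eq_single k h1).trans (Set.indicator_of_mem ha _)
  have hGm : ∀ x : E, Measurable (G x) := by
    intro x
    have hpart : ∀ N : ℕ, Measurable (fun a =>
        ∑ k ∈ Finset.range N, (T k).indicator (fun b => coef k x * g k b) a) := by
      intro N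
      apply Finset.measurable_sum
      intro k _
      exact (measurable_const.mul (hgm k)).indicator (hTm k)
    apply measurable_of_tendsto_metrizable hpart
    rw [tendsto_pi_nhds]
    intro a
    by_cases ha : a ∈ A
    · rcases Set.mem_iUnion.mp ha with ⟨k, hk⟩
      apply tendsto_atTop_of_eventually_const (i₀ := k + 1)
      intro N hN
      have hoth : ∀ j ∈ Finset.range N, j ≠ k →
          (T j).indicator (fun b => coef j x * g j b) a = 0 := fun j _ hj =>
        Set.indicator_of_notMem (fun hja => Set.disjoint_left.mp (hTd hj) hja hk) _
      rw [Finset.sum_eq_single_of_mem k (Finset.mem_range.mpr hN) hoth,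
        Set.indicator_of_mem hk, hG_on x k a hk]
    · apply tendsto_atTop_of_eventually_const (i₀ := 0)
      intro N _
      have h0 : ∀ k ∈ Finset.range N, (T k).indicator (fun b => coef k x * g k b) a = 0 :=
        fun k _ => Set.indicator_of_notMem (fun hk => ha (Set.mem_iUnion.mpr ⟨k, hk⟩)) _
      rw [Finset.sum_eq_zero h0, hG_off x a ha]
  have hGadd : ∀ (x y : E) (a : α), G (x + y) a = G x a + G y a := by
    intro x y a
    by_cases ha : a ∈ A
    · rcases Set.mem_iUnion.mp ha with ⟨k, hk⟩
      rw [hG_on (x+y) k a hk, hG_on x k a hk, hG_on y k a hk, hcoef_add]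
      ring
    · rw [hG_off (x+y) a ha, hG_off x a ha, hG_off y a ha]
      ring
  have hGsmul : ∀ (c : ℝ) (x : E) (a : α), G (c • x) a = c * G x a := by
    intro c x a
    by_cases ha : a ∈ A
    · rcases Set.mem_iUnion.mp ha with ⟨k, hk⟩
      rw [hG_on (c • x) k a hk, hG_on x k a hk, hcoef_smul]
      ring
    · rw [hG_off (c • x) a ha, hG_off x a ha]
      ring
  set L : E →ₗ[ℝ] (α →ₘ[μ] ℝ) :=
    { toFun := fun x => AEEqFun.mk (G x) (hGm x).aestronglyMeasurable
      map_add' := by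
        intro x y
        apply AEEqFun.ext
        filter_upwards [AEEqFun.coeFn_mk (G (x + y)) (hGm (x + y)).aestronglyMeasurable,
          AEEqFun.coeFn_add (AEEqFun.mk (G x) (hGm x).aestronglyMeasurable)
            (AEEqFun.mk (G y) (hGm y).aestronglyMeasurable),
          AEEqFun.coeFn_mk (G x) (hGm x).aestronglyMeasurable,
          AEEqFun.coeFn_mk (G y) (hGm y).aestronglyMeasurable] with a h1 h2 h3 h4
        rw [h1, h2, Pi.add_apply, h3, h4]
        exact hGadd x y a
      map_smul' := by
        intro c x
        apply AEEqFun.ext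
        filter_upwards [AEEqFun.coeFn_mk (G (c • x)) (hGm (c • x)).aestronglyMeasurable,
          AEEqFun.coeFn_smul c (AEEqFun.mk (G x) (hGm x).aestronglyMeasurable),
          AEEqFun.coeFn_mk (G x) (hGm x).aestronglyMeasurable] with a h1 h2 h3
        rw [h1, RingHom.id_apply, h2, Pi.smul_apply, h3, smul_eq_mul]
        exact hGsmul c x a } with hLdef
  have hLcoe : ∀ x : E, ⇑(L x) =ᵐ[μ] G x := fun x =>
    AEEqFun.coeFn_mk (G x) (hGm x).aestronglyMeasurable
  refine ⟨L, |CΩ| + (|CΩ| + C), by positivity, ?_⟩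
  intro x
  -- x vanishes a.e. off A
  have hx0 : ∀ᵐ a ∂μ, a ∉ A → (↑x : Lp ℝ q μ) a = 0 := by
    set M' : Lp ℝ q μ →L[ℝ] Lp ℝ q μ := indicatorCLM Aᶜ hAm.compl with hM'def
    have hM'coe : ∀ y : Lp ℝ q μ, ⇑(M' y) =ᵐ[μ] Aᶜ.indicator ⇑y := fun y =>
      indicatorCLM_coeFn Aᶜ hAm.compl y
    have hM'span : ∀ y ∈ Submodule.span ℝ (Set.range u), M' y = 0 := by
      intro y hy
      induction hy using Submodule.span_induction with
      | mem z hz =>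
        rcases hz with ⟨j, rfl⟩
        apply Lp.ext
        filter_upwards [hM'coe (u j), hTae j,
          Lp.coeFn_zero (E := ℝ) (p := q) (μ := μ)] with a h1 h2 h3
        rw [h1, h3, Pi.zero_apply]
        by_cases ha : a ∈ Aᶜ
        · rw [Set.indicator_of_mem ha]
          exact h2 fun hT => ha (Set.mem_iUnion.mpr ⟨j, hT⟩)
        · rw [Set.indicator_of_notMem ha]
      | zero => rw [map_zero]
      | add z w _ _ hz hw => rw [map_add, hz, hw, add_zero]
      | smul c z _ hz => rw [_root_.map_smul, hz, smul_zero]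
    have hle : E ≤ LinearMap.ker (M' : Lp ℝ q μ →ₗ[ℝ] Lp ℝ q μ) := by
      apply Submodule.topologicalClosure_minimal
      · intro y hy
        exact LinearMap.mem_ker.mpr (hM'span y hy)
      · exact ContinuousLinearMap.isClosed_ker M'
    have hM'x : M' ↑x = 0 := hle x.2
    have h0 : ⇑(M' ↑x) =ᵐ[μ] ⇑(0 : Lp ℝ q μ) := by rw [hM'x]
    filter_upwards [hM'coe ↑x, h0, Lp.coeFn_zero (E := ℝ) (p := q) (μ := μ)]
      with a h1 h2 h3 ha
    have : Aᶜ.indicator (⇑(↑x : Lp ℝ q μ)) a = 0 := by rw [← h1, h2, h3, Pi.zero_apply]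
    rwa [Set.indicator_of_mem (Set.mem_compl ha)] at this
  have hΩx0 : ∀ᵐ a ∂μ, a ∉ A → ⇑(Ω ↑x) a = 0 := by
    filter_upwards [hcontr ↑x, hx0] with a h1 h2 ha
    exact h1 (h2 ha)
  -- x agrees with its coefficient expansion on each T k
  have hxT : ∀ k : ℕ, ∀ᵐ a ∂μ, a ∈ T k → (↑x : Lp ℝ q μ) a = coef k x * u k a := by
    intro k
    have hsm : ⇑(M k ↑x) =ᵐ[μ] (coef k x) • ⇑(u k) := by
      rw [← hcoef k x]
      exact Lp.coeFn_smul (coef k x) (u k)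
    filter_upwards [hMcoe k ↑x, hsm] with a h1 h2 ha
    rw [← Set.indicator_of_mem ha (⇑(↑x : Lp ℝ q μ)), ← h1, h2, Pi.smul_apply, smul_eq_mul]
  -- the per-level estimate
  have h1N : ∀ N : ℕ, eLpNorm ((⋃ k ∈ Finset.range N, T k).indicator ⇑(Ω ↑x - L x)) q μ
      ≤ ENNReal.ofReal ((|CΩ| + (|CΩ| + C)) * ‖(↑x : Lp ℝ q μ)‖) := by
    intro N
    set lamN : Fin N → ℝ := fun k => coef (k:ℕ) x with hlamNdef
    set wN : Lp ℝ q μ := ∑ k : Fin N, lamN k • u (k:ℕ) with hwNdef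
    have hfin := finEst hq Ω CΩ hcen hcontr u hnorm hdisj C hC hnabla N lamN
    set AN : Set α := ⋃ k ∈ Finset.range N, T k with hANdef
    have hANm : MeasurableSet AN := (Finset.range N).measurableSet_biUnion fun k _ => hTm k
    have hmemAN : ∀ {a : α} {k : Fin N}, a ∈ T (k:ℕ) → a ∈ AN := by
      intro a k hk
      exact Set.mem_biUnion (Finset.mem_range.mpr k.2) hk
    have hnotANT : ∀ {a : α}, a ∉ AN → ∀ k : Fin N, a ∉ T (k:ℕ) := by
      intro a ha k hk
      exact ha (hmemAN hk)
    set φN : α → ℝ := AN.indicator (fun _ => (1:ℝ)) with hφNdef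
    have hφNm : Measurable φN := measurable_const.indicator hANm
    set fN : α →ₘ[μ] ℝ := AEEqFun.mk φN hφNm.aestronglyMeasurable with hfNdef
    have hfNcoe : ⇑fN =ᵐ[μ] φN := AEEqFun.coeFn_mk _ _
    have hφNle : ∀ a, ‖φN a‖ ≤ 1 := by
      intro a
      by_cases ha : a ∈ AN
      · rw [hφNdef]; rw [Set.indicator_of_mem ha]; simp
      · rw [hφNdef]; rw [Set.indicator_of_notMem ha]; simp
    have hfNsnorm : eLpNorm ⇑fN ⊤ μ ≤ 1 := by
      rw [eLpNorm_congr_ae hfNcoe, eLpNorm_exponent_top]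
      refine (eLpNormEssSup_le_of_ae_bound (C := 1)
        (Filter.Eventually.of_forall hφNle)).trans ?_
      simp
    have hfNmem : fN ∈ Lp ℝ ⊤ μ :=
      Lp.mem_Lp_iff_eLpNorm_lt_top.mpr (hfNsnorm.trans_lt ENNReal.one_lt_top)
    have hfNt : (eLpNorm ⇑fN ⊤ μ).toReal ≤ 1 := by
      have := ENNReal.toReal_mono ENNReal.one_ne_top hfNsnorm
      simpa using this
    have hwNcoe : ⇑wN =ᵐ[μ] fun a => ∑ k : Fin N, lamN k * u (k:ℕ) a := by
      filter_upwards [lpSum_coeFn Finset.univ (fun k : Fin N => lamN k • u (k:ℕ)),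
        ae_all_iff.mpr (fun k : Fin N => Lp.coeFn_smul (lamN k) (u (k:ℕ)))] with a hh1 hh2
      rw [hh1]
      exact Finset.sum_congr rfl fun k _ => by rw [hh2 k]; simp
    have hUN : ∀ᵐ a ∂μ, ∀ k : Fin N, a ∉ T (k:ℕ) → u (k:ℕ) a = 0 :=
      ae_all_iff.mpr fun k => hTae (k:ℕ)
    have hΩUN : ∀ᵐ a ∂μ, ∀ k : Fin N, a ∉ T (k:ℕ) → Ω (u (k:ℕ)) a = 0 :=
      ae_all_iff.mpr fun k => hΩT (k:ℕ)
    have hxTN : ∀ᵐ a ∂μ, ∀ k : Fin N, a ∈ T (k:ℕ) →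
        (↑x : Lp ℝ q μ) a = coef (k:ℕ) x * u (k:ℕ) a :=
      ae_all_iff.mpr fun k => hxT (k:ℕ)
    have hfNx : (↑wN : α →ₘ[μ] ℝ) = fN * ↑(↑x : Lp ℝ q μ) := by
      apply AEEqFun.ext
      filter_upwards [hwNcoe, AEEqFun.coeFn_mul fN ↑(↑x : Lp ℝ q μ), hfNcoe, hUN, hxTN]
        with a hh1 hh2 hh3 hh4 hh5
      rw [hh2, Pi.mul_apply, hh3]
      show ⇑wN a = φN a * (↑x : Lp ℝ q μ) a
      rw [hh1]
      by_cases ha : a ∈ AN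
      · rcases Set.mem_iUnion₂.mp ha with ⟨k, hkN, hk⟩
        have hkf : a ∈ T ((⟨k, Finset.mem_range.mp hkN⟩ : Fin N) : ℕ) := hk
        rw [hφNdef, Set.indicator_of_mem ha, one_mul,
          hh5 ⟨k, Finset.mem_range.mp hkN⟩ hkf]
        refine Finset.sum_eq_single (⟨k, Finset.mem_range.mp hkN⟩ : Fin N)
          (fun j _ hj => ?_) (by simp)
        have hja : a ∉ T (j:ℕ) := fun hja =>
          Set.disjoint_left.mp (hTd (by simpa using Fin.val_ne_of_ne hj)) hja hk
        rw [hh4 j hja, mul_zero]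
      · rw [hφNdef, Set.indicator_of_notMem ha, zero_mul]
        exact Finset.sum_eq_zero fun k _ => by rw [hh4 k (hnotANT ha k), mul_zero]
    have hcenN := hcen.2 fN hfNmem (↑x : Lp ℝ q μ) wN hfNx
    have bound1N : eLpNorm ⇑(Ω wN - fN * Ω ↑x) q μ
        ≤ ENNReal.ofReal (|CΩ| * ‖(↑x : Lp ℝ q μ)‖) := by
      refine hcenN.trans (ENNReal.ofReal_le_ofReal ?_)
      have hh1 := hfNt
      have hh2 : (0:ℝ) ≤ (eLpNorm ⇑fN ⊤ μ).toReal := ENNReal.toReal_nonneg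
      have hh3 : (0:ℝ) ≤ ‖(↑x : Lp ℝ q μ)‖ := norm_nonneg _
      calc CΩ * (eLpNorm ⇑fN ⊤ μ).toReal * ‖(↑x : Lp ℝ q μ)‖
          ≤ |CΩ| * (eLpNorm ⇑fN ⊤ μ).toReal * ‖(↑x : Lp ℝ q μ)‖ :=
            mul_le_mul_of_nonneg_right (mul_le_mul_of_nonneg_right (le_abs_self CΩ) hh2) hh3
        _ ≤ |CΩ| * 1 * ‖(↑x : Lp ℝ q μ)‖ :=
            mul_le_mul_of_nonneg_right (mul_le_mul_of_nonneg_left hh1 (abs_nonneg CΩ)) hh3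
        _ = |CΩ| * ‖(↑x : Lp ℝ q μ)‖ := by ring
    have hwNle : ‖wN‖ ≤ ‖(↑x : Lp ℝ q μ)‖ := by
      rw [Lp.norm_def, Lp.norm_def]
      apply ENNReal.toReal_mono (Lp.eLpNorm_ne_top (↑x : Lp ℝ q μ))
      apply eLpNorm_mono_ae
      have hwmul : ∀ᵐ a ∂μ, ⇑wN a = φN a * (↑x : Lp ℝ q μ) a := by
        have heq : ⇑wN =ᵐ[μ] ⇑(fN * ↑(↑x : Lp ℝ q μ)) := by rw [← hfNx]
        filter_upwards [heq, AEEqFun.coeFn_mul fN ↑(↑x : Lp ℝ q μ), hfNcoe]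
          with a ha hb hc
        rw [ha, hb, Pi.mul_apply, hc]
      filter_upwards [hwmul] with a ha
      rw [ha, norm_mul]
      calc ‖φN a‖ * ‖(↑x : Lp ℝ q μ) a‖ ≤ 1 * ‖(↑x : Lp ℝ q μ) a‖ :=
            mul_le_mul_of_nonneg_right (hφNle a) (norm_nonneg _)
        _ = ‖(↑x : Lp ℝ q μ) a‖ := one_mul _
    -- decomposition of the truncated difference
    have hdecN : AN.indicator ⇑(Ω ↑x - L x) =ᵐ[μ]
        (fun a => ⇑(fN * Ω ↑x) a - ⇑(Ω wN) a)
          + ⇑(Ω wN - ∑ k : Fin N, lamN k • Ω (u (k:ℕ))) := by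
      filter_upwards [AEEqFun.coeFn_sub (Ω ↑x) (L x), hLcoe x,
        AEEqFun.coeFn_mul fN (Ω ↑x), hfNcoe,
        AEEqFun.coeFn_sub (Ω wN) (∑ k : Fin N, lamN k • Ω (u (k:ℕ))),
        aeEqFunSum_coeFn Finset.univ (fun k : Fin N => lamN k • Ω (u (k:ℕ))),
        ae_all_iff.mpr (fun k : Fin N => AEEqFun.coeFn_smul (lamN k) (Ω (u (k:ℕ)))),
        hΩUN] with a hh1 hh2 hh3 hh4 hh5 hh6 hh7 hh8
    /-SPLIT-/
      rw [Pi.add_apply, hh3, Pi.mul_apply, hh4, hh5, Pi.sub_apply, hh6]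
      have hsum_eq : ∑ k : Fin N, (lamN k • Ω (u (k:ℕ))) a
          = ∑ k : Fin N, lamN k * ⇑(Ω (u (k:ℕ))) a :=
        Finset.sum_congr rfl fun k _ => by rw [hh7 k]; simp
      rw [hsum_eq]
      by_cases ha : a ∈ AN
      · rcases Set.mem_iUnion₂.mp ha with ⟨k, hkN, hk⟩
        set kf : Fin N := ⟨k, Finset.mem_range.mp hkN⟩ with hkfdef
        have hkTf : a ∈ T (kf:ℕ) := hk
        have hsum_single : ∑ j : Fin N, lamN j * ⇑(Ω (u (j:ℕ))) a
            = lamN kf * ⇑(Ω (u (kf:ℕ))) a := by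
          refine Finset.sum_eq_single kf (fun j _ hj => ?_) (by simp)
          have hja : a ∉ T (j:ℕ) := fun hja =>
            Set.disjoint_left.mp (hTd (by simpa using Fin.val_ne_of_ne hj)) hja hkTf
          rw [hh8 j hja, mul_zero]
        rw [Set.indicator_of_mem ha, hh1, Pi.sub_apply, hh2,
          hG_on x (kf:ℕ) a hkTf, hφNdef, Set.indicator_of_mem ha, hsum_single]
        show ⇑(Ω ↑x) a - coef (kf:ℕ) x * g (kf:ℕ) a
          = (1 * ⇑(Ω ↑x) a - ⇑(Ω wN) a) + (⇑(Ω wN) a - lamN kf * ⇑(Ω (u (kf:ℕ))) a)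
        rw [hgdef, hlamNdef]
        ring
      · have hsum_zero : ∑ j : Fin N, lamN j * ⇑(Ω (u (j:ℕ))) a = 0 :=
          Finset.sum_eq_zero fun j _ => by rw [hh8 j (hnotANT ha j), mul_zero]
        rw [Set.indicator_of_notMem ha, hφNdef, Set.indicator_of_notMem ha, hsum_zero]
        ring
    calc eLpNorm (AN.indicator ⇑(Ω ↑x - L x)) q μ
        = eLpNorm ((fun a => ⇑(fN * Ω ↑x) a - ⇑(Ω wN) a)
            + ⇑(Ω wN - ∑ k : Fin N, lamN k • Ω (u (k:ℕ)))) q μ :=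
          eLpNorm_congr_ae hdecN
      _ ≤ eLpNorm (fun a => ⇑(fN * Ω ↑x) a - ⇑(Ω wN) a) q μ
            + eLpNorm (⇑(Ω wN - ∑ k : Fin N, lamN k • Ω (u (k:ℕ)))) q μ :=
          eLpNorm_add_le ((AEEqFun.aestronglyMeasurable _).sub
            (AEEqFun.aestronglyMeasurable _)) (AEEqFun.aestronglyMeasurable _) hq1
      _ ≤ ENNReal.ofReal (|CΩ| * ‖(↑x : Lp ℝ q μ)‖)
            + ENNReal.ofReal ((|CΩ| + C) * ‖(↑x : Lp ℝ q μ)‖) := by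
          refine add_le_add ?_ ?_
          · have heq : eLpNorm (fun a => ⇑(fN * Ω ↑x) a - ⇑(Ω wN) a) q μ
                = eLpNorm ⇑(Ω wN - fN * Ω ↑x) q μ := by
              apply eLpNorm_congr_norm_ae
              filter_upwards [AEEqFun.coeFn_sub (Ω wN) (fN * Ω ↑x)] with a ha
              rw [ha, Pi.sub_apply, norm_sub_rev]
            rw [heq]
            exact bound1N
          · refine hfin.trans (ENNReal.ofReal_le_ofReal ?_)
            have : (0:ℝ) ≤ |CΩ| + C := by positivity
            exact mul_le_mul_of_nonneg_left hwNle this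
      _ = ENNReal.ofReal ((|CΩ| + (|CΩ| + C)) * ‖(↑x : Lp ℝ q μ)‖) := by
          rw [← ENNReal.ofReal_add (mul_nonneg (abs_nonneg _) (norm_nonneg _))
            (mul_nonneg (by positivity) (norm_nonneg _))]
          congr 1
          ring
  -- monotone convergence
  set D : α → ℝ := ⇑(Ω ↑x - L x) with hDdef
  set R : ℝ≥0∞ := ENNReal.ofReal ((|CΩ| + (|CΩ| + C)) * ‖(↑x : Lp ℝ q μ)‖) with hRdef
  have hDae0 : ∀ᵐ a ∂μ, a ∉ A → D a = 0 := by
    filter_upwards [AEEqFun.coeFn_sub (Ω ↑x) (L x), hΩx0, hLcoe x] with a h1 h2 h3 ha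
    rw [hDdef]
    rw [h1, Pi.sub_apply, h2 ha, h3, hG_off x a ha, sub_zero]
  have hIc : ∫⁻ a in Aᶜ, (‖D a‖₊ : ℝ≥0∞) ^ p ∂μ = 0 := by
    have hz : ∀ᵐ a ∂(μ.restrict Aᶜ), (‖D a‖₊ : ℝ≥0∞) ^ p = 0 := by
      rw [ae_restrict_iff' hAm.compl]
      filter_upwards [hDae0] with a h ha
      rw [h ha]
      simp [ENNReal.zero_rpow_of_pos hp]
    rw [lintegral_congr_ae hz, lintegral_zero]
  have hIA : ∫⁻ a, (‖D a‖₊ : ℝ≥0∞) ^ p ∂μ = ∫⁻ a in A, (‖D a‖₊ : ℝ≥0∞) ^ p ∂μ := by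
    rw [← lintegral_add_compl (fun a => (‖D a‖₊ : ℝ≥0∞) ^ p) hAm, hIc, add_zero]
  have hiU : ∫⁻ a in A, (‖D a‖₊ : ℝ≥0∞) ^ p ∂μ
      = ∑' k, ∫⁻ a in T k, (‖D a‖₊ : ℝ≥0∞) ^ p ∂μ :=
    lintegral_iUnion hTm hTd _
  have hNbound : ∀ N : ℕ, ∑ k ∈ Finset.range N, ∫⁻ a in T k, (‖D a‖₊ : ℝ≥0∞) ^ p ∂μ
      ≤ R ^ p := by
    intro N
    set AN : Set α := ⋃ k ∈ Finset.range N, T k with hANdef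
    have hANm : MeasurableSet AN := (Finset.range N).measurableSet_biUnion fun k _ => hTm k
    have hd : (↑(Finset.range N) : Set ℕ).PairwiseDisjoint T := fun i _ j _ hij => hTd hij
    rw [← lintegral_biUnion_finset hd (fun k _ => hTm k)]
    have hcongr : ∫⁻ a in AN, (‖D a‖₊ : ℝ≥0∞) ^ p ∂μ
        = ∫⁻ a in AN, (‖AN.indicator D a‖₊ : ℝ≥0∞) ^ p ∂μ := by
      apply setLIntegral_congr_fun hANm
      intro a ha
      dsimp only
      rw [Set.indicator_of_mem ha]
    calc ∫⁻ a in AN, (‖D a‖₊ : ℝ≥0∞) ^ p ∂μ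
        = ∫⁻ a in AN, (‖AN.indicator D a‖₊ : ℝ≥0∞) ^ p ∂μ := hcongr
      _ ≤ ∫⁻ a, (‖AN.indicator D a‖₊ : ℝ≥0∞) ^ p ∂μ := setLIntegral_le_lintegral _ _
      _ = (eLpNorm (AN.indicator D) q μ) ^ p := lintegral_rpow_eq_eLpNorm_rpow hq _
      _ ≤ R ^ p := ENNReal.rpow_le_rpow (h1N N) hp.le
  have hItotal : ∫⁻ a, (‖D a‖₊ : ℝ≥0∞) ^ p ∂μ ≤ R ^ p := by
    rw [hIA, hiU, ENNReal.tsum_eq_iSup_nat]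
    exact iSup_le hNbound
  calc eLpNorm ⇑(Ω ↑x - L x) q μ
      = (∫⁻ a, (‖D a‖₊ : ℝ≥0∞) ^ p ∂μ) ^ (1 / p) :=
        eLpNorm_eq_lintegral_rpow_nnnorm hq0 hq
    _ ≤ (R ^ p) ^ (1 / p) := ENNReal.rpow_le_rpow hItotal (by positivity)
    _ = R := by
        rw [← ENNReal.rpow_mul, mul_one_div_cancel hp.ne', ENNReal.rpow_one]




end Main

end Aux
/-- If for a contractive quasi-linear `L_∞`-centralizer `Ω` on `L_p(μ)`
and a normalized disjointly supported sequence `u` there is `C > 0` with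
`∇_{[λu]}Ω ≤ C‖λ‖_p` for all finitely supported scalars `λ`, then the restriction of `Ω`
to the closed linear span of `u` is trivial. -/
theorem trivialOn_closedSpan_of_nabla_bound
    {α : Type*} [MeasurableSpace α] {μ : Measure α} [SigmaFinite μ]
    {q : ℝ≥0∞} [Fact (1 ≤ q)] (hq : q ≠ ∞)
    (Ω : Lp ℝ q μ → (α →ₘ[μ] ℝ)) (CΩ : ℝ)
    (hcen : IsCentralizerWith Ω CΩ) (hql : L0QuasiLinear Ω) (hcontr : Contractive Ω)
    (u : ℕ → Lp ℝ q μ) (hnorm : ∀ n, ‖u n‖ = 1)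
    (hdisj : Pairwise (fun i j => DisjSupp (u i) (u j)))
    (C : ℝ) (hC : 0 < C)
    (hnabla : ∀ (m : ℕ) (lam : Fin m → ℝ),
      nabla Ω (fun k : Fin m => lam k • u (k : ℕ)) ≤
        ENNReal.ofReal (C * (∑ k : Fin m, |lam k| ^ q.toReal) ^ (1 / q.toReal))) :
    L0TrivialOn Ω (Submodule.span ℝ (Set.range u)).topologicalClosure :=
  main_statement hq Ω CΩ hcen hcontr u hnorm hdisj C hC hnabla
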